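/- Let Q* be the unique bounded measurable fixed point of T, let π* be a measurable greedy policy with respect to Q*, let Q̂_κ be bounded measurable with |Q̂_κ| ≤ Q_max, let π_κ be a measurable greedy policy with respect to Q̂_κ, and let Q^{π_κ} be the unique bounded measurable fixed point of T^{π_κ}. Then for every (x,a) ∈ X × A, 0 ≤ Q*(x,a) − Q^{π_κ}(x,a) ≤ γ·∑_{ℓ=0}^∞ γ^ℓ·((E^{π_κ})^ℓ ((E^{π*} − E^{π_κ})(Q* − Q̂_κ)))(x,a), where (E^{π_κ})^ℓ is the ℓ-fold composition of E^{π_κ} and the series converges absolutely. -/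

import Mathlib

open MeasureTheory ProbabilityTheory

/-- A function on `X × A` is bounded and measurable. -/
def BddMeas {X A : Type*} [MeasurableSpace X] [MeasurableSpace A]
    (Q : X × A → ℝ) : Prop :=
  Measurable Q ∧ ∃ M : ℝ, ∀ p : X × A, |Q p| ≤ M

/-- The Bellman optimality operator. -/
noncomputable def bellmanT {X A : Type*} [MeasurableSpace X] [MeasurableSpace A]
    (P : Kernel (X × A) X) (r : X × A → ℝ) (γ : ℝ) (Q : X × A → ℝ) :
    X × A → ℝ :=
  fun p => r p + γ * ∫ x', (⨆ a' : A, Q (x', a')) ∂(P p)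

/-- The Bellman evaluation operator of a deterministic policy `π : X → A`. -/
noncomputable def bellmanTdet {X A : Type*} [MeasurableSpace X] [MeasurableSpace A]
    (P : Kernel (X × A) X) (π : X → A) (r : X × A → ℝ) (γ : ℝ)
    (Q : X × A → ℝ) : X × A → ℝ :=
  fun p => r p + γ * ∫ x', Q (x', π x') ∂(P p)

/-- The expectation operator `E^π` of a deterministic policy `π : X → A`:
`E^π Q (x,a) = ∫ Q(x', π(x')) P(dx'|x,a)`. -/
noncomputable def evalDetPol {X A : Type*} [MeasurableSpace X] [MeasurableSpace A]
    (P : Kernel (X × A) X) (π : X → A) (Q : X × A → ℝ) : X × A → ℝ :=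
  fun p => ∫ x', Q (x', π x') ∂(P p)

section Aux

variable {X A : Type*} [MeasurableSpace X] [MeasurableSpace A]
  (P : Kernel (X × A) X) [IsMarkovKernel P] {π : X → A} (hπ : Measurable π)

include hπ in
lemma integrable_comp_policy {Q : X × A → ℝ} (hQ : Measurable Q) {M : ℝ}
    (hb : ∀ p, |Q p| ≤ M) (p : X × A) :
    Integrable (fun x' => Q (x', π x')) (P p) := by
  have hm : Measurable fun x' => Q (x', π x') :=
    hQ.comp (measurable_id.prodMk hπ)
  exact (integrable_const M).mono' hm.aestronglyMeasurable
    (Filter.Eventually.of_forall fun x' => by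
      simpa [Real.norm_eq_abs] using hb (x', π x'))

include hπ in
lemma evalDet_meas {Q : X × A → ℝ} (hQ : Measurable Q) :
    Measurable (evalDetPol P π Q) := by
  have : StronglyMeasurable fun q : (X × A) × X => Q (q.2, π q.2) :=
    (hQ.comp ((measurable_snd).prodMk (hπ.comp measurable_snd))).stronglyMeasurable
  exact this.integral_kernel_prod_right'.measurable

lemma evalDet_bound {Q : X × A → ℝ} {M : ℝ}
    (hb : ∀ p, |Q p| ≤ M) (p : X × A) : |evalDetPol P π Q p| ≤ M := by
  have := norm_integral_le_of_norm_le_const (μ := P p)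
    (f := fun x' => Q (x', π x')) (C := M)
    (Filter.Eventually.of_forall fun x' => by
      simpa [Real.norm_eq_abs] using hb (x', π x'))
  simpa [evalDetPol, Real.norm_eq_abs, measure_univ] using this

lemma evalDet_nonneg {Q : X × A → ℝ} (hQ : ∀ p, 0 ≤ Q p) (p : X × A) :
    0 ≤ evalDetPol P π Q p :=
  integral_nonneg fun x' => hQ (x', π x')

include hπ in
lemma evalDet_mono {Q₁ Q₂ : X × A → ℝ} (h1 : Measurable Q₁) (h2 : Measurable Q₂)
    {M₁ M₂ : ℝ} (hb1 : ∀ p, |Q₁ p| ≤ M₁) (hb2 : ∀ p, |Q₂ p| ≤ M₂)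
    (hle : ∀ p, Q₁ p ≤ Q₂ p) (p : X × A) :
    evalDetPol P π Q₁ p ≤ evalDetPol P π Q₂ p :=
  integral_mono (integrable_comp_policy P hπ h1 hb1 p)
    (integrable_comp_policy P hπ h2 hb2 p) (fun x' => hle (x', π x'))

include hπ in
lemma evalDet_sub {Q₁ Q₂ : X × A → ℝ} (h1 : Measurable Q₁) (h2 : Measurable Q₂)
    {M₁ M₂ : ℝ} (hb1 : ∀ p, |Q₁ p| ≤ M₁) (hb2 : ∀ p, |Q₂ p| ≤ M₂) (p : X × A) :
    evalDetPol P π (fun q => Q₁ q - Q₂ q) p = evalDetPol P π Q₁ p - evalDetPol P π Q₂ p :=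
  integral_sub (integrable_comp_policy P hπ h1 hb1 p)
    (integrable_comp_policy P hπ h2 hb2 p)

include hπ in
lemma evalDet_add_smul {Q₁ Q₂ : X × A → ℝ} (h1 : Measurable Q₁) (h2 : Measurable Q₂)
    {M₁ M₂ : ℝ} (hb1 : ∀ p, |Q₁ p| ≤ M₁) (hb2 : ∀ p, |Q₂ p| ≤ M₂) (c : ℝ) (p : X × A) :
    evalDetPol P π (fun q => c * Q₁ q + c * Q₂ q) p
      = c * evalDetPol P π Q₁ p + c * evalDetPol P π Q₂ p := by
  unfold evalDetPol
  rw [integral_add (((integrable_comp_policy P hπ h1 hb1 p).const_mul c))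
      (((integrable_comp_policy P hπ h2 hb2 p).const_mul c)),
    integral_const_mul, integral_const_mul]

include hπ in
/-- The core contraction/telescoping argument. -/
lemma core_bound {γ : ℝ} (hγ0 : 0 < γ) (hγ1 : γ < 1)
    (Δ h g : X × A → ℝ)
    (hΔm : Measurable Δ) {MΔ : ℝ} (hΔb : ∀ p, |Δ p| ≤ MΔ)
    (hhm : Measurable h) {Mh : ℝ} (hhb : ∀ p, |h p| ≤ Mh)
    (hgm : Measurable g) {Mg : ℝ} (hgb : ∀ p, |g p| ≤ Mg)
    (hpos : ∀ p, 0 ≤ h p) (hle : ∀ p, h p ≤ g p)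
    (hrec : ∀ p, Δ p = γ * h p + γ * evalDetPol P π Δ p) :
    ∀ p : X × A,
      0 ≤ Δ p ∧
      Δ p ≤ γ * ∑' ℓ : ℕ, γ ^ ℓ * ((evalDetPol P π)^[ℓ] g) p ∧
      Summable (fun ℓ : ℕ => |γ ^ ℓ * ((evalDetPol P π)^[ℓ] g) p|) := by
  have hγn : ∀ n : ℕ, (0:ℝ) ≤ γ ^ n := fun n => pow_nonneg hγ0.le n
  -- properties of the iterates of h and g
  have hIter : ∀ n : ℕ,
      Measurable ((evalDetPol P π)^[n] h) ∧ (∀ q, |(evalDetPol P π)^[n] h q| ≤ Mh) ∧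
      Measurable ((evalDetPol P π)^[n] g) ∧ (∀ q, |(evalDetPol P π)^[n] g q| ≤ Mg) ∧
      (∀ q, 0 ≤ (evalDetPol P π)^[n] h q) ∧
      (∀ q, (evalDetPol P π)^[n] h q ≤ (evalDetPol P π)^[n] g q) := by
    intro n
    induction n with
    | zero => exact ⟨hhm, hhb, hgm, hgb, hpos, hle⟩
    | succ n ih =>
      obtain ⟨mh, bh, mg, bg, ph, lh⟩ := ih
      have eh : (evalDetPol P π)^[n+1] h = evalDetPol P π ((evalDetPol P π)^[n] h) :=
        Function.iterate_succ_apply' _ n h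
      have eg : (evalDetPol P π)^[n+1] g = evalDetPol P π ((evalDetPol P π)^[n] g) :=
        Function.iterate_succ_apply' _ n g
      rw [eh, eg]
      exact ⟨evalDet_meas P hπ mh, fun q => evalDet_bound P bh q,
        evalDet_meas P hπ mg, fun q => evalDet_bound P bg q,
        fun q => evalDet_nonneg P ph q,
        fun q => evalDet_mono P hπ mh mg bh bg lh q⟩
  have hIterΔ : ∀ n : ℕ,
      Measurable ((evalDetPol P π)^[n] Δ) ∧ (∀ q, |(evalDetPol P π)^[n] Δ q| ≤ MΔ) := by
    intro n
    induction n with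
    | zero => exact ⟨hΔm, hΔb⟩
    | succ n ih =>
      have e : (evalDetPol P π)^[n+1] Δ = evalDetPol P π ((evalDetPol P π)^[n] Δ) :=
        Function.iterate_succ_apply' _ n Δ
      rw [e]
      exact ⟨evalDet_meas P hπ ih.1, fun q => evalDet_bound P ih.2 q⟩
  -- the recursion for the iterates
  have recn : ∀ n : ℕ, ∀ q : X × A,
      (evalDetPol P π)^[n] Δ q
        = γ * (evalDetPol P π)^[n] h q + γ * (evalDetPol P π)^[n+1] Δ q := by
    intro n
    induction n with
    | zero => simpa using hrec
    | succ n ih =>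
      intro q
      have e1 : (evalDetPol P π)^[n+1] Δ = evalDetPol P π ((evalDetPol P π)^[n] Δ) :=
        Function.iterate_succ_apply' _ n Δ
      have e2 : (evalDetPol P π)^[n+1] h = evalDetPol P π ((evalDetPol P π)^[n] h) :=
        Function.iterate_succ_apply' _ n h
      have e3 : (evalDetPol P π)^[n+2] Δ = evalDetPol P π ((evalDetPol P π)^[n+1] Δ) :=
        Function.iterate_succ_apply' _ (n+1) Δ
      calc (evalDetPol P π)^[n+1] Δ q
          = evalDetPol P π ((evalDetPol P π)^[n] Δ) q := by rw [e1]
        _ = evalDetPol P π (fun q' => γ * (evalDetPol P π)^[n] h q'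
              + γ * (evalDetPol P π)^[n+1] Δ q') q := by
            congr 1; funext q'; exact ih q'
        _ = γ * evalDetPol P π ((evalDetPol P π)^[n] h) q
              + γ * evalDetPol P π ((evalDetPol P π)^[n+1] Δ) q :=
            evalDet_add_smul P hπ (hIter n).1 (hIterΔ (n+1)).1
              (hIter n).2.1 (hIterΔ (n+1)).2 γ q
        _ = γ * (evalDetPol P π)^[n+1] h q + γ * (evalDetPol P π)^[n+2] Δ q := by
            rw [← e2, ← e3]
  -- the telescoped identity
  have tel : ∀ n : ℕ, ∀ q : X × A,
      Δ q = (∑ ℓ ∈ Finset.range n, γ ^ (ℓ+1) * (evalDetPol P π)^[ℓ] h q)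
        + γ ^ n * (evalDetPol P π)^[n] Δ q := by
    intro n
    induction n with
    | zero => intro q; simp
    | succ n ih =>
      intro q
      rw [Finset.sum_range_succ]
      have h1 := ih q
      have h2 := recn n q
      rw [h1, h2]; ring
  intro p
  -- summability
  have hub : ∀ ℓ : ℕ, |γ ^ ℓ * (evalDetPol P π)^[ℓ] g p| ≤ Mg * γ ^ ℓ := by
    intro ℓ
    rw [abs_mul, abs_pow, abs_of_nonneg hγ0.le, mul_comm]
    exact mul_le_mul_of_nonneg_right ((hIter ℓ).2.2.2.1 p) (hγn ℓ)
  have hsum_bd : Summable (fun ℓ : ℕ => Mg * γ ^ ℓ) :=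
    (summable_geometric_of_lt_one hγ0.le hγ1).mul_left Mg
  have habs : Summable (fun ℓ : ℕ => |γ ^ ℓ * (evalDetPol P π)^[ℓ] g p|) :=
    Summable.of_nonneg_of_le (fun ℓ => abs_nonneg _) hub hsum_bd
  have hsum : Summable (fun ℓ : ℕ => γ ^ ℓ * (evalDetPol P π)^[ℓ] g p) :=
    habs.of_abs
  refine ⟨?_, ?_, habs⟩
  · -- lower bound
    have hlow : ∀ n : ℕ, -(MΔ * γ ^ n) ≤ Δ p := by
      intro n
      have hs : 0 ≤ ∑ ℓ ∈ Finset.range n, γ ^ (ℓ+1) * (evalDetPol P π)^[ℓ] h p :=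
        Finset.sum_nonneg fun ℓ _ =>
          mul_nonneg (hγn (ℓ+1)) ((hIter ℓ).2.2.2.2.1 p)
      have h1 : -MΔ ≤ (evalDetPol P π)^[n] Δ p := neg_le_of_abs_le ((hIterΔ n).2 p)
      have h2 : γ ^ n * (-MΔ) ≤ γ ^ n * (evalDetPol P π)^[n] Δ p :=
        mul_le_mul_of_nonneg_left h1 (hγn n)
      have h3 := tel n p
      nlinarith [h3]
    have ht : Filter.Tendsto (fun n : ℕ => -(MΔ * γ ^ n)) Filter.atTop (nhds 0) := by
      have := (tendsto_pow_atTop_nhds_zero_of_lt_one hγ0.le hγ1).const_mul MΔ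
      simpa using this.neg
    exact le_of_tendsto ht (Filter.Eventually.of_forall hlow)
  · -- upper bound
    have hup : ∀ n : ℕ,
        Δ p ≤ γ * (∑ ℓ ∈ Finset.range n, γ ^ ℓ * (evalDetPol P π)^[ℓ] g p)
          + MΔ * γ ^ n := by
      intro n
      have h3 := tel n p
      have hsumle : (∑ ℓ ∈ Finset.range n, γ ^ (ℓ+1) * (evalDetPol P π)^[ℓ] h p)
          ≤ ∑ ℓ ∈ Finset.range n, γ ^ (ℓ+1) * (evalDetPol P π)^[ℓ] g p :=
        Finset.sum_le_sum fun ℓ _ =>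
          mul_le_mul_of_nonneg_left ((hIter ℓ).2.2.2.2.2 p) (hγn (ℓ+1))
      have heq : (∑ ℓ ∈ Finset.range n, γ ^ (ℓ+1) * (evalDetPol P π)^[ℓ] g p)
          = γ * ∑ ℓ ∈ Finset.range n, γ ^ ℓ * (evalDetPol P π)^[ℓ] g p := by
        rw [Finset.mul_sum]
        exact Finset.sum_congr rfl fun ℓ _ => by ring
      have h2 : γ ^ n * (evalDetPol P π)^[n] Δ p ≤ γ ^ n * MΔ :=
        mul_le_mul_of_nonneg_left (le_of_abs_le ((hIterΔ n).2 p)) (hγn n)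
      nlinarith [h3]
    have ht : Filter.Tendsto
        (fun n : ℕ => γ * (∑ ℓ ∈ Finset.range n, γ ^ ℓ * (evalDetPol P π)^[ℓ] g p)
          + MΔ * γ ^ n) Filter.atTop
        (nhds (γ * ∑' ℓ : ℕ, γ ^ ℓ * (evalDetPol P π)^[ℓ] g p + 0)) := by
      exact (hsum.hasSum.tendsto_sum_nat.const_mul γ).add
        (by simpa using
          (tendsto_pow_atTop_nhds_zero_of_lt_one hγ0.le hγ1).const_mul MΔ)
    have := ge_of_tendsto ht (Filter.Eventually.of_forall hup)
    simpa using this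

end Aux

/-- pointwise on `X × A`,
`0 ≤ Q* − Q^{π_κ} ≤ γ·∑_{ℓ=0}^∞ γ^ℓ·(E^{π_κ})^ℓ((E^{π*} − E^{π_κ})(Q* − Q̂_κ))`,
and the series converges absolutely. -/
theorem statement14
    {X A : Type*} [MeasurableSpace X]
    [Fintype A] [Nonempty A] [MeasurableSpace A] [MeasurableSingletonClass A]
    (P : Kernel (X × A) X) [IsMarkovKernel P]
    (r : X × A → ℝ) (hr_meas : Measurable r)
    (Rmax : ℝ) (hr_bd : ∀ p : X × A, |r p| ≤ Rmax)
    (γ : ℝ) (hγ0 : 0 < γ) (hγ1 : γ < 1)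
    -- `Q*` is the unique bounded measurable fixed point of `T`
    (Qstar : X × A → ℝ) (hQstar_bm : BddMeas Qstar)
    (hQstar_fix : bellmanT P r γ Qstar = Qstar)
    (hQstar_unique : ∀ Q' : X × A → ℝ, BddMeas Q' → bellmanT P r γ Q' = Q' → Q' = Qstar)
    -- `π*` is a measurable greedy policy w.r.t. `Q*`
    (πstar : X → A) (hπstar_meas : Measurable πstar)
    (hπstar_greedy : ∀ x : X, Qstar (x, πstar x) = ⨆ a : A, Qstar (x, a))
    -- `Q̂_κ` bounded measurable with `|Q̂_κ| ≤ Q_max`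
    (Qhat : X × A → ℝ) (hQhat_meas : Measurable Qhat)
    (hQhat_bd : ∀ p : X × A, |Qhat p| ≤ Rmax / (1 - γ))
    -- `π_κ` is a measurable greedy policy w.r.t. `Q̂_κ`
    (πκ : X → A) (hπκ_meas : Measurable πκ)
    (hπκ_greedy : ∀ x : X, Qhat (x, πκ x) = ⨆ a : A, Qhat (x, a))
    -- `Q^{π_κ}` is the unique bounded measurable fixed point of `T^{π_κ}`
    (Qpik : X × A → ℝ) (hQpik_bm : BddMeas Qpik)
    (hQpik_fix : bellmanTdet P πκ r γ Qpik = Qpik)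
    (hQpik_unique : ∀ Q' : X × A → ℝ, BddMeas Q' →
      bellmanTdet P πκ r γ Q' = Q' → Q' = Qpik) :
    ∀ p : X × A,
      0 ≤ Qstar p - Qpik p ∧
      Qstar p - Qpik p ≤
        γ * ∑' ℓ : ℕ, γ ^ ℓ *
          ((evalDetPol P πκ)^[ℓ]
            (fun q => evalDetPol P πstar (fun q' => Qstar q' - Qhat q') q -
              evalDetPol P πκ (fun q' => Qstar q' - Qhat q') q)) p ∧
      Summable (fun ℓ : ℕ => |γ ^ ℓ *
          ((evalDetPol P πκ)^[ℓ]
            (fun q => evalDetPol P πstar (fun q' => Qstar q' - Qhat q') q -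
              evalDetPol P πκ (fun q' => Qstar q' - Qhat q') q)) p|) := by
  obtain ⟨hQs_meas, M1, hM1⟩ := hQstar_bm
  obtain ⟨hQp_meas, M2, hM2⟩ := hQpik_bm
  -- fixed-point identities
  have hfix1 : ∀ p, Qstar p = r p + γ * evalDetPol P πstar Qstar p := by
    intro p
    have h1 := congrFun hQstar_fix p
    have h2 : evalDetPol P πstar Qstar p = ∫ x', (⨆ a' : A, Qstar (x', a')) ∂(P p) :=
      integral_congr_ae (Filter.Eventually.of_forall fun x' => hπstar_greedy x')
    rw [← h1]
    simp only [bellmanT]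
    rw [h2]
  have hfix2 : ∀ p, Qpik p = r p + γ * evalDetPol P πκ Qpik p :=
    fun p => (congrFun hQpik_fix p).symm
  -- the functions Δ, h, g and their properties
  have hF_meas : Measurable fun q : X × A => Qstar q - Qhat q :=
    hQs_meas.sub hQhat_meas
  have hF_bd : ∀ q : X × A, |Qstar q - Qhat q| ≤ M1 + Rmax / (1 - γ) :=
    fun q => (abs_sub _ _).trans (add_le_add (hM1 q) (hQhat_bd q))
  have hΔm : Measurable fun q : X × A => Qstar q - Qpik q := hQs_meas.sub hQp_meas
  have hΔb : ∀ q : X × A, |Qstar q - Qpik q| ≤ M1 + M2 :=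
    fun q => (abs_sub _ _).trans (add_le_add (hM1 q) (hM2 q))
  have hhm : Measurable fun q : X × A =>
      evalDetPol P πstar Qstar q - evalDetPol P πκ Qstar q :=
    (evalDet_meas P hπstar_meas hQs_meas).sub (evalDet_meas P hπκ_meas hQs_meas)
  have hhb : ∀ q : X × A,
      |evalDetPol P πstar Qstar q - evalDetPol P πκ Qstar q| ≤ M1 + M1 :=
    fun q => (abs_sub _ _).trans
      (add_le_add (evalDet_bound P hM1 q) (evalDet_bound P hM1 q))
  have hgm : Measurable fun q : X × A =>
      evalDetPol P πstar (fun q' => Qstar q' - Qhat q') q -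
        evalDetPol P πκ (fun q' => Qstar q' - Qhat q') q :=
    (evalDet_meas P hπstar_meas hF_meas).sub (evalDet_meas P hπκ_meas hF_meas)
  have hgb : ∀ q : X × A,
      |evalDetPol P πstar (fun q' => Qstar q' - Qhat q') q -
        evalDetPol P πκ (fun q' => Qstar q' - Qhat q') q|
        ≤ (M1 + Rmax / (1 - γ)) + (M1 + Rmax / (1 - γ)) :=
    fun q => (abs_sub _ _).trans
      (add_le_add (evalDet_bound P hF_bd q) (evalDet_bound P hF_bd q))
  -- positivity of h
  have hpos0 : ∀ p, evalDetPol P πκ Qstar p ≤ evalDetPol P πstar Qstar p := by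
    intro p
    refine integral_mono (integrable_comp_policy P hπκ_meas hQs_meas hM1 p)
      (integrable_comp_policy P hπstar_meas hQs_meas hM1 p) (fun x' => ?_)
    rw [hπstar_greedy x']
    exact le_ciSup (f := fun a : A => Qstar (x', a)) (Set.Finite.bddAbove (Set.finite_range _)) (πκ x')
  have hpos : ∀ p : X × A,
      0 ≤ evalDetPol P πstar Qstar p - evalDetPol P πκ Qstar p :=
    fun p => sub_nonneg.mpr (hpos0 p)
  -- h ≤ g
  have hhat : ∀ p, evalDetPol P πstar Qhat p ≤ evalDetPol P πκ Qhat p := by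
    intro p
    refine integral_mono (integrable_comp_policy P hπstar_meas hQhat_meas hQhat_bd p)
      (integrable_comp_policy P hπκ_meas hQhat_meas hQhat_bd p) (fun x' => ?_)
    rw [hπκ_greedy x']
    exact le_ciSup (f := fun a : A => Qhat (x', a)) (Set.Finite.bddAbove (Set.finite_range _)) (πstar x')
  have hle : ∀ p : X × A,
      evalDetPol P πstar Qstar p - evalDetPol P πκ Qstar p ≤
        evalDetPol P πstar (fun q' => Qstar q' - Qhat q') p -
          evalDetPol P πκ (fun q' => Qstar q' - Qhat q') p := by
    intro p
    rw [evalDet_sub P hπstar_meas hQs_meas hQhat_meas hM1 hQhat_bd p,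
      evalDet_sub P hπκ_meas hQs_meas hQhat_meas hM1 hQhat_bd p]
    linarith [hhat p]
  -- the recursion
  have hrec : ∀ p : X × A,
      Qstar p - Qpik p = γ * (evalDetPol P πstar Qstar p - evalDetPol P πκ Qstar p)
        + γ * evalDetPol P πκ (fun q => Qstar q - Qpik q) p := by
    intro p
    rw [evalDet_sub P hπκ_meas hQs_meas hQp_meas hM1 hM2 p]
    have h1 := hfix1 p
    have h2 := hfix2 p
    linarith
  exact core_bound P hπκ_meas hγ0 hγ1
    (fun q => Qstar q - Qpik q)
    (fun q => evalDetPol P πstar Qstar q - evalDetPol P πκ Qstar q)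
    (fun q => evalDetPol P πstar (fun q' => Qstar q' - Qhat q') q -
      evalDetPol P πκ (fun q' => Qstar q' - Qhat q') q)
    hΔm hΔb hhm hhb hgm hgb hpos hle hrec
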